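/- arXiv:2206.13267 — 2 statements merged into one kernel-verified Lean document; each statement's English description precedes it below -/
import Mathlib

section
/- Let E_ℓ be the set of finite measures on I × ℝ^ℓ of the form μ = Σ_{i∈V} δ_{(i,x^i)} where V ⊆ I is finite, x^i ∈ ℝ^ℓ, and no two distinct labels in V are comparable for the strict prefix order (i ⊀ j for all i,j ∈ V). Then E_ℓ is a closed subset of the space M_F(I × ℝ^ℓ) of finite measures on I × ℝ^ℓ equipped with the topology of weak convergence. -/
open MeasureTheory BoundedContinuousFunction

noncomputable section

/- The label set `I` carries the discrete topology: the metric `d^I` satisfies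
`d^I(i,j) ≥ 1` whenever `i ≠ j`. -/
instance : TopologicalSpace (List ℕ) := ⊥
instance : DiscreteTopology (List ℕ) := ⟨rfl⟩
instance : MeasurableSpace (List ℕ) := ⊤
instance : OpensMeasurableSpace (List ℕ) := ⟨le_top⟩

/-- The Dirac mass at a point, as a finite measure. -/
def diracFM {Ω : Type*} [MeasurableSpace Ω] (a : Ω) : FiniteMeasure Ω :=
  ⟨Measure.dirac a, inferInstance⟩

instance : MeasurableSingletonClass (List ℕ) := ⟨fun _ => trivial⟩

namespace EClosedAux

variable {ℓ : ℕ}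

local notation "E" => EuclideanSpace ℝ (Fin ℓ)

/-- indicator of `i` as a bounded continuous function on the discrete label space -/
def ind (i : List ℕ) : List ℕ →ᵇ ℝ :=
  BoundedContinuousFunction.mkOfBound ⟨fun j => if j = i then (1:ℝ) else 0,
    continuous_of_discreteTopology⟩ 1 (by
      intro x y
      dsimp
      split_ifs <;> simp [Real.dist_eq])

/-- test functions: indicator of the label `i` times a bounded continuous function of the
spatial coordinate -/
def Ftest (ℓ : ℕ) (i : List ℕ) (φ : EuclideanSpace ℝ (Fin ℓ) →ᵇ ℝ) :
    (List ℕ × EuclideanSpace ℝ (Fin ℓ)) →ᵇ ℝ :=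
  ((ind i).compContinuous ⟨Prod.fst, continuous_fst⟩) *
    (φ.compContinuous ⟨Prod.snd, continuous_snd⟩)

lemma Ftest_apply (i : List ℕ) (φ : E →ᵇ ℝ) (p : List ℕ × E) :
    Ftest ℓ i φ p = if p.1 = i then φ p.2 else 0 := by
  show (if p.1 = i then (1:ℝ) else 0) * φ p.2 = _
  split_ifs <;> simp

/-- the slice over label `i` -/
def Si (ℓ : ℕ) (i : List ℕ) : Set (List ℕ × EuclideanSpace ℝ (Fin ℓ)) :=
  {i} ×ˢ Set.univ

lemma measurableSet_Si (i : List ℕ) : MeasurableSet (Si ℓ i) :=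
  (MeasurableSet.singleton i).prod MeasurableSet.univ

lemma mem_Si {i : List ℕ} {p : List ℕ × E} : p ∈ Si ℓ i ↔ p.1 = i := by
  rw [Si, Set.mem_prod]
  simp

lemma disjoint_Si : Pairwise (Function.onFun Disjoint (Si ℓ)) := by
  intro i j hij
  simp only [Function.onFun, Set.disjoint_left]
  intro p hp hq
  exact hij ((mem_Si.1 hp).symm.trans (mem_Si.1 hq))

/-- the spatial distribution over label `i` -/
def nu (ℓ : ℕ) (m : Measure (List ℕ × EuclideanSpace ℝ (Fin ℓ))) (i : List ℕ) :
    Measure (EuclideanSpace ℝ (Fin ℓ)) :=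
  Measure.map Prod.snd (m.restrict (Si ℓ i))

lemma nu_univ (m : Measure (List ℕ × E)) (i : List ℕ) :
    nu ℓ m i Set.univ = m (Si ℓ i) := by
  rw [nu, Measure.map_apply measurable_snd MeasurableSet.univ]
  simp

lemma integral_Ftest (m : Measure (List ℕ × E)) (i : List ℕ) (φ : E →ᵇ ℝ) :
    ∫ p, Ftest ℓ i φ p ∂m = ∫ y, φ y ∂(nu ℓ m i) := by
  rw [nu, integral_map measurable_snd.aemeasurable φ.continuous.aestronglyMeasurable,
    ← integral_indicator (measurableSet_Si i)]
  congr 1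
  ext p
  rw [Ftest_apply]
  by_cases h : p.1 = i
  · rw [if_pos h, Set.indicator_of_mem (mem_Si.2 h)]
  · rw [if_neg h, Set.indicator_of_notMem (fun hm => h (mem_Si.1 hm))]

lemma integral_Ftest_one (μ : FiniteMeasure (List ℕ × E)) (i : List ℕ) :
    ∫ p, Ftest ℓ i 1 p ∂(μ : Measure (List ℕ × E)) =
      ((μ : Measure (List ℕ × E)) (Si ℓ i)).toReal := by
  rw [integral_Ftest]
  simp only [BoundedContinuousFunction.coe_one, Pi.one_apply]
  rw [integral_const, smul_eq_mul, mul_one, measureReal_def, nu_univ]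

lemma restrict_eq_map (m : Measure (List ℕ × E)) (i : List ℕ) :
    m.restrict (Si ℓ i) = Measure.map (fun y : E => (i, y)) (nu ℓ m i) := by
  rw [nu, Measure.map_map measurable_prodMk_left measurable_snd]
  have h : (fun p : List ℕ × E => (i, p.2)) =ᵐ[m.restrict (Si ℓ i)] id := by
    filter_upwards [ae_restrict_mem (measurableSet_Si i)] with p hp
    have h1 : p.1 = i := mem_Si.1 hp
    simp [Prod.ext_iff, h1]
  calc m.restrict (Si ℓ i) = Measure.map id (m.restrict (Si ℓ i)) := (Measure.map_id).symm
    _ = Measure.map ((fun y : E => (i, y)) ∘ Prod.snd) (m.restrict (Si ℓ i)) :=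
        (Measure.map_congr h).symm

/-- arctan of the k-th coordinate, as a bounded continuous function on Euclidean space -/
def arctanBCF (ℓ : ℕ) (k : Fin ℓ) : EuclideanSpace ℝ (Fin ℓ) →ᵇ ℝ :=
  BoundedContinuousFunction.mkOfBound
    ⟨fun y => Real.arctan (y k), Real.continuous_arctan.comp ((continuous_apply k).comp (PiLp.continuous_ofLp 2 _))⟩
    Real.pi (by
      intro x y
      have hb : ∀ t : ℝ, |Real.arctan t| ≤ Real.pi / 2 := fun t =>
        (abs_le.2 ⟨(Real.neg_pi_div_two_lt_arctan t).le, (Real.arctan_lt_pi_div_two t).le⟩)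
      calc dist (Real.arctan (x k)) (Real.arctan (y k))
          ≤ |Real.arctan (x k)| + |Real.arctan (y k)| := by
            rw [Real.dist_eq]; exact abs_sub _ _
        _ ≤ Real.pi / 2 + Real.pi / 2 := add_le_add (hb _) (hb _)
        _ = Real.pi := by ring)

/-- A probability measure all of whose bounded continuous test functions have vanishing
variance is a Dirac mass. -/
lemma exists_dirac (ν : Measure E) [IsProbabilityMeasure ν]
    (h : ∀ φ : E →ᵇ ℝ, (∫ y, φ y ∂ν) * (∫ y, φ y ∂ν) = ∫ y, (φ * φ) y ∂ν) :
    ∃ x : E, ν = Measure.dirac x := by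
  have hconst : ∀ φ : E →ᵇ ℝ, ∀ᵐ y ∂ν, φ y = ∫ z, φ z ∂ν := by
    intro φ
    set c := ∫ z, φ z ∂ν with hc
    set ψ := φ - BoundedContinuousFunction.const _ c with hψ
    have hψint : ∫ y, ψ y ∂ν = 0 := by
      have h1 : ∫ y, ψ y ∂ν = (∫ y, φ y ∂ν) - ∫ _ : E, c ∂ν := by
        simp only [hψ, BoundedContinuousFunction.coe_sub, Pi.sub_apply,
          BoundedContinuousFunction.const_apply]
        exact integral_sub (φ.integrable ν) (integrable_const c)
      rw [h1, integral_const]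
      simp
      exact sub_self _
    have h2 : ∫ y, (ψ * ψ) y ∂ν = 0 := by rw [← h ψ, hψint, mul_zero]
    have h3 : ⇑(ψ * ψ) =ᵐ[ν] 0 :=
      (integral_eq_zero_iff_of_nonneg (fun y => mul_self_nonneg (ψ y))
        ((ψ * ψ).integrable ν)).1 h2
    filter_upwards [h3] with y hy
    have h4 : ψ y = 0 := mul_self_eq_zero.1 (by simpa using hy)
    have h5 : φ y - c = 0 := h4
    linarith
  set c : Fin ℓ → ℝ := fun k => ∫ y, arctanBCF ℓ k y ∂ν with hcdef
  have hall : ∀ᵐ y ∂ν, ∀ k : Fin ℓ, Real.arctan (y k) = c k := by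
    rw [ae_all_iff]
    intro k
    exact hconst (arctanBCF ℓ k)
  have hne : (ae ν).NeBot := inferInstance
  obtain ⟨y₀, hy₀⟩ := hall.exists
  have hae : ∀ᵐ y ∂ν, y = y₀ := by
    filter_upwards [hall] with y hy
    refine PiLp.ext fun k => ?_
    exact Real.arctan_injective ((hy k).trans (hy₀ k).symm)
  refine ⟨y₀, ?_⟩
  have hnull : ν {y | ¬ y = y₀} = 0 := ae_iff.1 hae
  ext s hs
  rw [Measure.dirac_apply' _ hs]
  by_cases hy : y₀ ∈ s
  · have hsc : ν sᶜ = 0 := by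
      refine measure_mono_null ?_ hnull
      intro z hz hz'
      exact hz (by rw [hz']; exact hy)
    rw [(prob_compl_eq_zero_iff hs).1 hsc]
    simp [Set.indicator_of_mem hy]
  · have : ν s = 0 := by
      refine measure_mono_null ?_ hnull
      intro z hz hz'
      exact hy (hz' ▸ hz)
    rw [this]
    simp [Set.indicator_of_notMem hy]

lemma toMeasure_sum (V : Finset (List ℕ)) (x : List ℕ → E) :
    ((∑ i ∈ V, diracFM (i, x i) : FiniteMeasure (List ℕ × E)) : Measure (List ℕ × E)) =
      ∑ i ∈ V, Measure.dirac (i, x i) :=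
  map_sum FiniteMeasure.toMeasureAddMonoidHom _ V

lemma integral_sum_dirac (V : Finset (List ℕ)) (x : List ℕ → E)
    (f : (List ℕ × E) →ᵇ ℝ) :
    ∫ p, f p ∂((∑ i ∈ V, diracFM (i, x i) : FiniteMeasure (List ℕ × E)) :
        Measure (List ℕ × E)) = ∑ i ∈ V, f (i, x i) := by
  rw [toMeasure_sum, integral_finset_sum_measure (fun i _ => f.integrable _)]
  exact Finset.sum_congr rfl fun i _ => integral_dirac _ _

end EClosedAux

open EClosedAux

/-- The set `E_ℓ` of finite measures of the form `Σ_{i ∈ V} δ_{(i, xⁱ)}`, with `V ⊆ I`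
finite and the labels of `V` pairwise incomparable for the strict prefix order,
is closed in the space of finite measures on `I × ℝ^ℓ` with the weak topology. -/
theorem E_closed (ℓ : ℕ) :
    IsClosed {μ : FiniteMeasure (List ℕ × EuclideanSpace ℝ (Fin ℓ)) |
      ∃ (V : Finset (List ℕ)) (x : List ℕ → EuclideanSpace ℝ (Fin ℓ)),
        (∀ i ∈ V, ∀ j ∈ V, ¬ (i <+: j ∧ i ≠ j)) ∧
        μ = ∑ i ∈ V, diracFM (i, x i)} := by
  classical
  set Ω := List ℕ × EuclideanSpace ℝ (Fin ℓ) with hΩ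
  have hIcont : ∀ f : Ω →ᵇ ℝ,
      Continuous fun μ : FiniteMeasure Ω => ∫ p, f p ∂(μ : Measure Ω) := fun f =>
    FiniteMeasure.continuous_integral_boundedContinuousFunction f
  have hset : {μ : FiniteMeasure Ω |
      ∃ (V : Finset (List ℕ)) (x : List ℕ → EuclideanSpace ℝ (Fin ℓ)),
        (∀ i ∈ V, ∀ j ∈ V, ¬ (i <+: j ∧ i ≠ j)) ∧
        μ = ∑ i ∈ V, diracFM (i, x i)} =
      (⋂ i : List ℕ, {μ : FiniteMeasure Ω |
        (∫ p, Ftest ℓ i 1 p ∂(μ : Measure Ω)) *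
          ((∫ p, Ftest ℓ i 1 p ∂(μ : Measure Ω)) - 1) = 0}) ∩
      ((⋂ i : List ℕ, ⋂ j : List ℕ, ⋂ _ : i <+: j ∧ i ≠ j, {μ : FiniteMeasure Ω |
        (∫ p, Ftest ℓ i 1 p ∂(μ : Measure Ω)) +
          (∫ p, Ftest ℓ j 1 p ∂(μ : Measure Ω)) ≤ 1}) ∩
      (⋂ i : List ℕ, ⋂ φ : EuclideanSpace ℝ (Fin ℓ) →ᵇ ℝ, {μ : FiniteMeasure Ω |
        (∫ p, Ftest ℓ i φ p ∂(μ : Measure Ω)) * (∫ p, Ftest ℓ i φ p ∂(μ : Measure Ω)) =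
          (∫ p, Ftest ℓ i 1 p ∂(μ : Measure Ω)) *
            ∫ p, Ftest ℓ i (φ * φ) p ∂(μ : Measure Ω)})) := by
    ext μ
    simp only [Set.mem_setOf_eq, Set.mem_inter_iff, Set.mem_iInter]
    constructor
    · rintro ⟨V, x, hV, rfl⟩
      have key : ∀ (i : List ℕ) (φ : EuclideanSpace ℝ (Fin ℓ) →ᵇ ℝ),
          ∫ p, Ftest ℓ i φ p ∂((∑ j ∈ V, diracFM (j, x j) : FiniteMeasure Ω) : Measure Ω) =
            if i ∈ V then φ (x i) else 0 := by
        intro i φ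
        rw [integral_sum_dirac, ← Finset.sum_ite_eq' V i (fun j => φ (x j))]
        exact Finset.sum_congr rfl fun j _ => Ftest_apply i φ (j, x j)
      refine ⟨?_, ?_, ?_⟩
      · intro i
        rw [key]
        split_ifs <;> simp
      · intro i j hij
        rw [key, key]
        by_cases hi : i ∈ V
        · by_cases hj : j ∈ V
          · exact absurd hij (hV i hi j hj)
          · simp [hi, hj]
        · by_cases hj : j ∈ V <;> simp [hi, hj]
      · intro i φ
        rw [key, key, key]
        split_ifs <;> simp
    · rintro ⟨hA, hB, hC⟩
      set m : Measure Ω := (μ : Measure Ω) with hm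
      have hIeq : ∀ i : List ℕ, ∫ p, Ftest ℓ i 1 p ∂m = (m (Si ℓ i)).toReal := fun i =>
        integral_Ftest_one μ i
      have h01 : ∀ i, m (Si ℓ i) = 0 ∨ m (Si ℓ i) = 1 := by
        intro i
        have hAi := hA i
        rw [hIeq i, mul_eq_zero, sub_eq_zero] at hAi
        rcases hAi with h | h
        · left
          rcases (ENNReal.toReal_eq_zero_iff _).1 h with h' | h'
          · exact h'
          · exact absurd h' (measure_ne_top m _)
        · right
          exact (ENNReal.toReal_eq_one_iff _).1 h
      have hVfin : {i : List ℕ | m (Si ℓ i) = 1}.Finite := by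
        refine Set.Finite.subset (Measure.finite_const_le_meas_of_disjoint_iUnion m
          (ε := 1) zero_lt_one (fun i => measurableSet_Si i) disjoint_Si
          (measure_ne_top m _)) ?_
        intro i hi
        exact le_of_eq hi.symm
      have hprob : ∀ i ∈ hVfin.toFinset, ∃ y, nu ℓ m i = Measure.dirac y := by
        intro i hi
        rw [Set.Finite.mem_toFinset] at hi
        have : IsProbabilityMeasure (nu ℓ m i) := ⟨by rw [nu_univ]; exact hi⟩
        refine exists_dirac (nu ℓ m i) ?_
        intro φ
        have hCi := hC i φ
        rw [integral_Ftest m i φ, integral_Ftest m i (φ * φ), hIeq i, hi] at hCi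
        simpa using hCi
      choose y hy using hprob
      set x : List ℕ → EuclideanSpace ℝ (Fin ℓ) := fun i =>
        if h : i ∈ hVfin.toFinset then y i h else 0 with hx
      have hres : ∀ i ∈ hVfin.toFinset, m.restrict (Si ℓ i) = Measure.dirac (i, x i) := by
        intro i hi
        rw [restrict_eq_map m i, hy i hi, Measure.map_dirac' measurable_prodMk_left]
        have hxi : x i = y i hi := by simp only [hx]; rw [dif_pos hi]
        rw [hxi]
      refine ⟨hVfin.toFinset, x, ?_, ?_⟩
      · rintro i hi j hj ⟨hpre, hne⟩
        have hBij := hB i j ⟨hpre, hne⟩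
        have hi' : m (Si ℓ i) = 1 := hVfin.mem_toFinset.mp hi
        have hj' : m (Si ℓ j) = 1 := hVfin.mem_toFinset.mp hj
        rw [hIeq i, hIeq j, hi', hj'] at hBij
        norm_num at hBij
      · apply FiniteMeasure.toMeasure_injective
        rw [toMeasure_sum]
        set U : Set Ω := ⋃ i ∈ hVfin.toFinset, Si ℓ i with hU
        have hUm : MeasurableSet U :=
          hVfin.toFinset.measurableSet_biUnion (fun i _ => measurableSet_Si i)
        have hnull : m Uᶜ = 0 := by
          have hsub : Uᶜ ⊆ ⋃ i : {i : List ℕ // m (Si ℓ i) = 0}, Si ℓ (i : List ℕ) := by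
            intro p hp
            rcases h01 p.1 with h | h
            · exact Set.mem_iUnion.2 ⟨⟨p.1, h⟩, mem_Si.2 rfl⟩
            · exact absurd (Set.mem_biUnion (Set.Finite.mem_toFinset hVfin |>.2 h)
                (mem_Si.2 rfl)) hp
          exact measure_mono_null hsub (measure_iUnion_null fun i => i.2)
        refine Measure.ext fun s hs => ?_
        rw [Measure.finset_sum_apply]
        calc m s = m (s ∩ U) + m (s \ U) := (measure_inter_add_diff s hUm).symm
          _ = m (s ∩ U) := by
              rw [measure_mono_null (show s \ U ⊆ Uᶜ from fun p hp => hp.2) hnull, add_zero]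
          _ = m (⋃ i ∈ hVfin.toFinset, s ∩ Si ℓ i) := by rw [hU, Set.inter_iUnion₂]
          _ = ∑ i ∈ hVfin.toFinset, m (s ∩ Si ℓ i) := by
              refine measure_biUnion_finset ?_ (fun i _ => hs.inter (measurableSet_Si i))
              intro i _ j _ hij
              exact ((disjoint_Si hij).mono inf_le_right inf_le_right)
          _ = ∑ i ∈ hVfin.toFinset, Measure.dirac (i, x i) s :=
              Finset.sum_congr rfl fun i hi => by
                rw [← hres i hi, Measure.restrict_apply hs]
  rw [hset]
  refine IsClosed.inter
    (isClosed_iInter fun i => isClosed_eq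
      ((hIcont _).mul ((hIcont _).sub continuous_const)) continuous_const)
    (IsClosed.inter
      (isClosed_iInter fun i => isClosed_iInter fun j => isClosed_iInter fun _ =>
        isClosed_le ((hIcont _).add (hIcont _)) continuous_const)
      (isClosed_iInter fun i => isClosed_iInter fun φ =>
        isClosed_eq ((hIcont _).mul (hIcont _)) ((hIcont _).mul (hIcont _))))
end
end

section
/- If a sequence μ_n = Σ_{i∈V_n} δ_{(i,x_n^i)} in E_ℓ converges weakly to a finite measure μ on I × ℝ^ℓ, then for every i ∈ I the sequence of indicators 1_{i∈V_n} is eventually constant, and if its limit is 1 then (x_n^i)_n converges in ℝ^ℓ. -/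
open MeasureTheory Filter
open scoped BoundedContinuousFunction

noncomputable section

instance inst_s7 : MeasurableSingletonClass (List ℕ) := ⟨fun _ => trivial⟩

namespace WeakLimitAux

variable {ℓ : ℕ}

/-- The indicator of `{i} × ℝ^ℓ` as a bounded continuous function. -/
def indBCF (ℓ : ℕ) (i : List ℕ) : (List ℕ × EuclideanSpace ℝ (Fin ℓ)) →ᵇ ℝ :=
  BoundedContinuousFunction.ofNormedAddCommGroup
    (fun p => if p.1 = i then 1 else 0)
    ((continuous_of_discreteTopology
      (f := fun j : List ℕ => if j = i then (1:ℝ) else 0)).comp continuous_fst)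
    1 (by intro p; by_cases h : p.1 = i <;> simp [h])

@[simp] lemma indBCF_apply (i : List ℕ) (p : List ℕ × EuclideanSpace ℝ (Fin ℓ)) :
    indBCF ℓ i p = if p.1 = i then 1 else 0 := rfl

/-- The function `(j, y) ↦ 1_{j = i} · φ(y)` as a bounded continuous function. -/
def mulBCF (ℓ : ℕ) (i : List ℕ) (φ : EuclideanSpace ℝ (Fin ℓ) →ᵇ ℝ) :
    (List ℕ × EuclideanSpace ℝ (Fin ℓ)) →ᵇ ℝ :=
  BoundedContinuousFunction.ofNormedAddCommGroup
    (fun p => (if p.1 = i then 1 else 0) * φ p.2)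
    (Continuous.mul
      ((continuous_of_discreteTopology
        (f := fun j : List ℕ => if j = i then (1:ℝ) else 0)).comp continuous_fst)
      (φ.continuous.comp continuous_snd))
    ‖φ‖ (by
      intro p
      by_cases h : p.1 = i
      · simpa [h] using φ.norm_coe_le_norm p.2
      · simp [h, norm_nonneg] )

@[simp] lemma mulBCF_apply (i : List ℕ) (φ : EuclideanSpace ℝ (Fin ℓ) →ᵇ ℝ)
    (p : List ℕ × EuclideanSpace ℝ (Fin ℓ)) :
    mulBCF ℓ i φ p = (if p.1 = i then 1 else 0) * φ p.2 := rfl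

/-- A continuous "plateau" function: `1` on the ball of radius `C - 1`,
vanishing outside the ball of radius `C`. -/
def plateau (ℓ : ℕ) (C : ℝ) : EuclideanSpace ℝ (Fin ℓ) →ᵇ ℝ :=
  BoundedContinuousFunction.ofNormedAddCommGroup
    (fun y => max 0 (min 1 (C - ‖y‖)))
    (continuous_const.max ((continuous_const.min
      (continuous_const.sub continuous_norm))))
    1 (by
      intro y
      rw [Real.norm_eq_abs, abs_le]
      constructor
      · have := le_max_left (0:ℝ) (min 1 (C - ‖y‖)); linarith
      · exact max_le zero_le_one (min_le_left _ _))

@[simp] lemma plateau_apply (C : ℝ) (y : EuclideanSpace ℝ (Fin ℓ)) :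
    plateau ℓ C y = max 0 (min 1 (C - ‖y‖)) := rfl

lemma plateau_nonneg (C : ℝ) (y : EuclideanSpace ℝ (Fin ℓ)) :
    0 ≤ plateau ℓ C y := le_max_left _ _

lemma plateau_eq_one {C : ℝ} {y : EuclideanSpace ℝ (Fin ℓ)} (h : ‖y‖ ≤ C - 1) :
    plateau ℓ C y = 1 := by
  have h1 : min 1 (C - ‖y‖) = 1 := min_eq_left (by linarith)
  simp [plateau_apply, h1]

lemma norm_le_of_plateau_pos {C : ℝ} {y : EuclideanSpace ℝ (Fin ℓ)}
    (h : 0 < plateau ℓ C y) : ‖y‖ ≤ C := by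
  rcases lt_max_iff.mp h with h' | h'
  · exact absurd h' (lt_irrefl 0)
  · have := lt_min_iff.mp h'
    linarith [this.2]

/-- `min (dist · a) 1` as a bounded continuous function. -/
def distBCF (ℓ : ℕ) (a : EuclideanSpace ℝ (Fin ℓ)) : EuclideanSpace ℝ (Fin ℓ) →ᵇ ℝ :=
  BoundedContinuousFunction.ofNormedAddCommGroup
    (fun y => min (dist y a) 1)
    ((continuous_id.dist continuous_const).min continuous_const)
    1 (by
      intro y
      rw [Real.norm_eq_abs, abs_le]
      constructor
      · have : (0:ℝ) ≤ min (dist y a) 1 := le_min dist_nonneg zero_le_one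
        linarith
      · exact min_le_right _ _)

@[simp] lemma distBCF_apply (a y : EuclideanSpace ℝ (Fin ℓ)) :
    distBCF ℓ a y = min (dist y a) 1 := rfl

/-- Integrals of bounded continuous functions against the empirical measures converge. -/
lemma key (ℓ : ℕ) (V : ℕ → Finset (List ℕ)) (x : ℕ → List ℕ → EuclideanSpace ℝ (Fin ℓ))
    (μ : FiniteMeasure (List ℕ × EuclideanSpace ℝ (Fin ℓ)))
    (hconv : Tendsto (fun n => ∑ i ∈ V n, diracFM (i, x n i)) atTop (nhds μ))
    (g : (List ℕ × EuclideanSpace ℝ (Fin ℓ)) →ᵇ ℝ) :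
    Tendsto (fun n => ∑ j ∈ V n, g (j, x n j)) atTop
      (nhds (∫ p, g p ∂(μ : Measure (List ℕ × EuclideanSpace ℝ (Fin ℓ))))) := by
  have h := FiniteMeasure.tendsto_iff_forall_integral_tendsto.mp hconv g
  refine Tendsto.congr (fun n => ?_) h
  have hcoe : ((∑ i ∈ V n, diracFM (i, x n i) : FiniteMeasure _) :
      Measure (List ℕ × EuclideanSpace ℝ (Fin ℓ)))
      = ∑ i ∈ V n, Measure.dirac (i, x n i) :=
    map_sum (FiniteMeasure.toMeasureAddMonoidHom
      (Ω := List ℕ × EuclideanSpace ℝ (Fin ℓ))) (fun i => diracFM (i, x n i)) (V n)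
  rw [hcoe, integral_finset_sum_measure (fun i _ => g.integrable _)]
  refine Finset.sum_congr rfl fun j _ => ?_
  rw [integral_dirac]

end WeakLimitAux

open WeakLimitAux

/-- If a sequence `μ_n = Σ_{i ∈ V_n} δ_{(i, x_nⁱ)}` of elements of `E_ℓ` converges
weakly to a finite measure `μ` on `I × ℝ^ℓ`, then for every label `i` the indicator
`1_{i ∈ V_n}` is eventually constant, and if `i` eventually belongs to `V_n`
then the sequence `(x_nⁱ)_n` converges in `ℝ^ℓ`. -/
theorem weak_limit_labels_eventually_constant (ℓ : ℕ)
    (V : ℕ → Finset (List ℕ)) (x : ℕ → List ℕ → EuclideanSpace ℝ (Fin ℓ))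
    (hinc : ∀ n, ∀ i ∈ V n, ∀ j ∈ V n, ¬ (i <+: j ∧ i ≠ j))
    (μ : FiniteMeasure (List ℕ × EuclideanSpace ℝ (Fin ℓ)))
    (hconv : Tendsto (fun n => ∑ i ∈ V n, diracFM (i, x n i)) atTop (nhds μ)) :
    ∀ i : List ℕ,
      ((∀ᶠ n in atTop, i ∈ V n) ∨ (∀ᶠ n in atTop, i ∉ V n)) ∧
      ((∀ᶠ n in atTop, i ∈ V n) →
        ∃ y : EuclideanSpace ℝ (Fin ℓ), Tendsto (fun n => x n i) atTop (nhds y)) := by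
  classical
  intro i
  set M : Measure (List ℕ × EuclideanSpace ℝ (Fin ℓ)) :=
    (μ : Measure (List ℕ × EuclideanSpace ℝ (Fin ℓ))) with hM
  -- The indicator sequence converges to `c`.
  set c : ℝ := ∫ p, indBCF ℓ i p ∂M with hc
  have h1 : Tendsto (fun n => if i ∈ V n then (1:ℝ) else 0) atTop (nhds c) := by
    have := key ℓ V x μ hconv (indBCF ℓ i)
    refine Tendsto.congr (fun n => ?_) this
    rw [← Finset.sum_ite_eq' (V n) i (fun _ => (1:ℝ))]
    exact Finset.sum_congr rfl fun j _ => by simp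
  -- Part 1: the indicators are eventually constant.
  have hpart1 : (∀ᶠ n in atTop, i ∈ V n) ∨ (∀ᶠ n in atTop, i ∉ V n) := by
    have hev : ∀ᶠ n in atTop, dist (if i ∈ V n then (1:ℝ) else 0) c < 1/2 :=
      h1.eventually (Metric.ball_mem_nhds c (by norm_num))
    rcases le_or_gt c (1/2) with hcle | hclt
    · right
      filter_upwards [hev] with n hn
      intro hmem
      rw [if_pos hmem, Real.dist_eq] at hn
      have := abs_lt.mp hn
      linarith [this.1]
    · left
      filter_upwards [hev] with n hn
      by_contra hmem
      rw [if_neg hmem, Real.dist_eq] at hn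
      have := abs_lt.mp hn
      linarith [this.2]
  refine ⟨hpart1, ?_⟩
  intro hev
  -- Then `c = 1`.
  have hc1 : c = 1 := by
    refine tendsto_nhds_unique (h1.congr' ?_) tendsto_const_nhds
    filter_upwards [hev] with n hn
    rw [if_pos hn]
  -- For every bounded continuous `g : E →ᵇ ℝ`, the values `g (x n i)` converge.
  have hL : ∀ g : EuclideanSpace ℝ (Fin ℓ) →ᵇ ℝ,
      Tendsto (fun n => g (x n i)) atTop (nhds (∫ p, mulBCF ℓ i g p ∂M)) := by
    intro g
    have hkey := key ℓ V x μ hconv (mulBCF ℓ i g)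
    have heq : (fun n => ∑ j ∈ V n, mulBCF ℓ i g (j, x n j))
        = fun n => if i ∈ V n then g (x n i) else 0 := by
      funext n
      rw [← Finset.sum_ite_eq' (V n) i (fun j => g (x n j))]
      exact Finset.sum_congr rfl fun j _ => by by_cases h : j = i <;> simp [h]
    rw [heq] at hkey
    refine hkey.congr' ?_
    filter_upwards [hev] with n hn
    rw [if_pos hn]
  -- `c` is the measure of `{i} × ℝ^ℓ`.
  have hsmeas : MeasurableSet (Prod.fst ⁻¹' {i} : Set (List ℕ × EuclideanSpace ℝ (Fin ℓ))) :=
    measurable_fst (MeasurableSet.singleton i)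
  have hcmeas : c = (M (Prod.fst ⁻¹' {i})).toReal := by
    have hind : ⇑(indBCF ℓ i)
        = Set.indicator (Prod.fst ⁻¹' {i}) (fun _ => (1:ℝ)) := by
      funext p
      rw [Set.indicator_apply]
      simp [Set.mem_preimage]
    rw [hc, hind, integral_indicator_const _ hsmeas]
    simp
    rfl
  -- Choose `R` with `μ({i} × closedBall 0 R) > 1/2`.
  set S : ℕ → Set (List ℕ × EuclideanSpace ℝ (Fin ℓ)) :=
    fun m => Prod.fst ⁻¹' {i} ∩ Prod.snd ⁻¹' (Metric.closedBall 0 m) with hS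
  have hSmono : Monotone S := by
    intro a b hab
    exact Set.inter_subset_inter_right _
      (Set.preimage_mono (Metric.closedBall_subset_closedBall (by exact_mod_cast hab)))
  have hSunion : (⋃ m, S m) = Prod.fst ⁻¹' {i} := by
    apply Set.Subset.antisymm
    · exact Set.iUnion_subset fun m => Set.inter_subset_left
    · intro p hp
      obtain ⟨m, hm⟩ := exists_nat_ge ‖p.2‖
      refine Set.mem_iUnion.mpr ⟨m, hp, ?_⟩
      simp only [Set.mem_preimage, Metric.mem_closedBall, dist_zero_right]
      exact hm
  have htend : Tendsto (fun m => (M (S m)).toReal) atTop (nhds 1) := by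
    have h0 : Tendsto (fun m => M (S m)) atTop (nhds (M (⋃ m, S m))) :=
      tendsto_measure_iUnion_atTop hSmono
    rw [hSunion] at h0
    have hne : M (Prod.fst ⁻¹' {i}) ≠ ⊤ := measure_ne_top _ _
    have := (ENNReal.tendsto_toReal hne).comp h0
    rwa [← hcmeas, hc1] at this
  obtain ⟨R, hR⟩ : ∃ R : ℕ, 1/2 < (M (S R)).toReal :=
    (htend.eventually (eventually_gt_nhds (by norm_num))).exists
  -- The plateau function at radius `R+1`.
  set ψ : EuclideanSpace ℝ (Fin ℓ) →ᵇ ℝ := plateau ℓ (R + 1 + 1) with hψ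
  set Lψ : ℝ := ∫ p, mulBCF ℓ i ψ p ∂M with hLψ
  have hSRmeas : MeasurableSet (S R) :=
    hsmeas.inter (measurable_snd (Metric.isClosed_closedBall.measurableSet))
  have hLψ_ge : (M (S R)).toReal ≤ Lψ := by
    have hineq : ∀ p : List ℕ × EuclideanSpace ℝ (Fin ℓ),
        Set.indicator (S R) (fun _ => (1:ℝ)) p ≤ mulBCF ℓ i ψ p := by
      intro p
      rw [Set.indicator_apply]
      by_cases hp : p ∈ S R
      · rw [if_pos hp]
        obtain ⟨hp1, hp2⟩ := hp
        have h2 : ‖p.2‖ ≤ (R:ℝ) := by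
          simpa [dist_zero_right] using hp2
        have : ψ p.2 = 1 := plateau_eq_one (by push_cast; linarith)
        simp [Set.mem_preimage] at hp1
        simp [mulBCF_apply, hp1, this]
      · rw [if_neg hp]
        refine mul_nonneg ?_ (plateau_nonneg _ _)
        positivity
    have hint1 : Integrable (Set.indicator (S R) (fun _ => (1:ℝ))) M :=
      (integrable_const (1:ℝ)).indicator hSRmeas
    have := integral_mono hint1 ((mulBCF ℓ i ψ).integrable M) hineq
    rwa [integral_indicator_const _ hSRmeas, smul_eq_mul, mul_one] at this
  have hLψ_half : 1/2 < Lψ := lt_of_lt_of_le hR hLψ_ge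
  -- The sequence is eventually in a closed ball.
  have hball : ∀ᶠ n in atTop, x n i ∈ Metric.closedBall (0 : EuclideanSpace ℝ (Fin ℓ)) (R + 1 + 1) := by
    have := (hL ψ).eventually (eventually_gt_nhds hLψ_half)
    filter_upwards [this] with n hn
    have hpos : 0 < ψ (x n i) := lt_trans (by norm_num) hn
    have := norm_le_of_plateau_pos hpos
    simpa [Metric.mem_closedBall, dist_zero_right] using this
  -- Any two subsequential limits agree, via the bounded continuous test functions.
  have huniq : ∀ b : EuclideanSpace ℝ (Fin ℓ), ∀ ns : ℕ → ℕ, Tendsto ns atTop atTop →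
      Tendsto (fun k => x (ns k) i) atTop (nhds b) →
      ∀ g : EuclideanSpace ℝ (Fin ℓ) →ᵇ ℝ, g b = ∫ p, mulBCF ℓ i g p ∂M := by
    intro b ns hns hb g
    exact tendsto_nhds_unique ((g.continuous.tendsto b).comp hb) ((hL g).comp hns)
  -- Extract one subsequential limit `a`.
  obtain ⟨a, -, φ₀, hφ₀mono, hφ₀tend⟩ :=
    tendsto_subseq_of_frequently_bounded (x := fun n => x n i)
      Metric.isBounded_closedBall hball.frequently
  refine ⟨a, ?_⟩
  apply tendsto_of_subseq_tendsto
  intro ns hns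
  have hfreq : ∃ᶠ k in atTop, x (ns k) i ∈ Metric.closedBall (0 : EuclideanSpace ℝ (Fin ℓ)) (R + 1 + 1) :=
    (hns.eventually hball).frequently
  obtain ⟨b, -, ms, hmsmono, hmstend⟩ :=
    tendsto_subseq_of_frequently_bounded (x := fun k => x (ns k) i)
      Metric.isBounded_closedBall hfreq
  have hba : b = a := by
    have h1 := huniq a φ₀ hφ₀mono.tendsto_atTop hφ₀tend
    have h2 := huniq b (ns ∘ ms) (hns.comp hmsmono.tendsto_atTop) hmstend
    have hgeq : ∀ g : EuclideanSpace ℝ (Fin ℓ) →ᵇ ℝ, g b = g a := fun g => by rw [h1 g, h2 g]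
    have hmin0 : min (dist b a) 1 = 0 := by
      have := hgeq (distBCF ℓ a)
      simp only [distBCF_apply, dist_self] at this
      rw [this]
      exact min_eq_left zero_le_one
    have hd0 : dist b a = 0 := by
      by_contra hne
      have hpos : 0 < dist b a := lt_of_le_of_ne dist_nonneg (Ne.symm hne)
      have h2 : 0 < min (dist b a) 1 := lt_min hpos one_pos
      rw [hmin0] at h2
      exact lt_irrefl 0 h2
    exact dist_eq_zero.mp hd0
  exact ⟨ms, hba ▸ hmstend⟩
end
end
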